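/- For integers m ≥ n ≥ 1, the Garsia–Remmel q-hit numbers and the Dworkin-variant q-hit numbers of a partition λ inside an m×m board satisfy H̃_j^{m}(λ) = q^{|λ| − jm} · H_j^{m,m}(λ), where H̃_j^{m}(λ) is defined by ∑_j H̃_j^{m}(λ) x^j = ∑_i R_i(λ)[m−i]! ∏_{k=m−i+1}^{m}(x − q^k). -/

import Mathlib

open Finset

noncomputable section
open scoped Classical

variable {K : Type*} [Field K]

/-- The `q`-integer `[x] = (1 - q^x)/(1 - q)` for an integer `x`. -/
def qInt (q : K) (x : ℤ) : K := (1 - q ^ x) / (1 - q)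

/-- The falling `q`-factorial `[x]_j = [x][x-1]⋯[x-j+1]`. -/
def qFall (q : K) (x : ℤ) (j : ℕ) : K := ∏ t ∈ Finset.range j, qInt q (x - t)

/-- The `q`-factorial `[n]! = [n]_n`. -/
def qFact (q : K) (n : ℕ) : K := qFall q (n : ℤ) n

/-- The Gaussian (`q`-)binomial coefficient `[a]!/([b]! [a-b]!)`. -/
def qBinom (q : K) (a b : ℕ) : K := qFact q a / (qFact q b * qFact q (a - b))

/-- The cells of the Ferrers board of `lam` (1-indexed rows `1,…,ℓ`):
cell `(i,j)` with `1 ≤ i ≤ ℓ` and `1 ≤ j ≤ lam i`. -/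
def board (lam : ℕ → ℕ) (ℓ : ℕ) : Finset (ℕ × ℕ) :=
  ((Finset.Icc 1 ℓ) ×ˢ (Finset.Icc 1 ((Finset.Icc 1 ℓ).sup lam))).filter
    (fun c => c.2 ≤ lam c.1)

/-- Placements of `k` non-attacking rooks on the Ferrers board of `lam`. -/
def placements (lam : ℕ → ℕ) (ℓ k : ℕ) : Finset (Finset (ℕ × ℕ)) :=
  (board lam ℓ).powerset.filter
    (fun p => p.card = k ∧ ∀ a ∈ p, ∀ b ∈ p, a ≠ b → a.1 ≠ b.1 ∧ a.2 ≠ b.2)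

/-- The Garsia–Remmel inversion statistic of a rook placement `p`: the number of
cells of the board that are not occupied by a rook and not directly west
(same row, with a rook strictly to the east) or north (same column, with a rook
strictly to the south) of a rook. -/
def rInv (lam : ℕ → ℕ) (ℓ : ℕ) (p : Finset (ℕ × ℕ)) : ℕ :=
  ((board lam ℓ).filter (fun c => c ∉ p ∧
      (∀ r ∈ p, r.1 = c.1 → r.2 < c.2) ∧
      (∀ r ∈ p, r.2 = c.2 → r.1 < c.1))).card

/-- The Garsia–Remmel `q`-rook number `R_k(λ) = ∑_p q^{inv(p)}`. -/
def qRook (q : K) (lam : ℕ → ℕ) (ℓ k : ℕ) : K :=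
  ∑ p ∈ placements lam ℓ k, q ^ rInv lam ℓ p

/-- The size `|λ| = λ_1 + ⋯ + λ_ℓ`. -/
def pSize (lam : ℕ → ℕ) (ℓ : ℕ) : ℕ := ∑ i ∈ Finset.Icc 1 ℓ, lam i

/-- The `q`-hit numbers `H_k^{m,n}(λ)` of `λ ⊆ n×m`, defined from the `q`-rook
numbers by the change of basis
`H_k^{m,n}(λ) = (q^{C(k,2)-|λ|}/[m-n]!) ∑_{i=k}^{n} R_i(λ) [m-i]! qbinom(i,k) (-1)^{i+k} q^{mi-C(i,2)}`. -/
def qHit (q : K) (m n : ℕ) (lam : ℕ → ℕ) (ℓ k : ℕ) : K :=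
  (q ^ ((k.choose 2 : ℤ) - (pSize lam ℓ : ℤ)) / qFact q (m - n)) *
    ∑ i ∈ Finset.Icc k n, qRook q lam ℓ i * qFact q (m - i) * qBinom q i k *
      (-1 : K) ^ (i + k) * q ^ ((m : ℤ) * (i : ℤ) - (i.choose 2 : ℤ))

/-- `lam : ℕ → ℕ` is a partition with exactly `ℓ` (positive) parts `lam 1 ≥ ⋯ ≥ lam ℓ ≥ 1`. -/
def IsPartition (lam : ℕ → ℕ) (ℓ : ℕ) : Prop :=
  (∀ i j, 1 ≤ i → i ≤ j → lam j ≤ lam i) ∧ (∀ i, ℓ < i → lam i = 0) ∧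
    (∀ i, 1 ≤ i → i ≤ ℓ → 1 ≤ lam i)

/-- `lam` is a partition with `ℓ` parts contained in an `n × m` board. -/
def IsPartitionIn (lam : ℕ → ℕ) (ℓ n m : ℕ) : Prop :=
  IsPartition lam ℓ ∧ ℓ ≤ n ∧ lam 1 ≤ m

/-- The rectangular partition `a^b` (`b` parts equal to `a`). -/
def rect (a b : ℕ) : ℕ → ℕ := fun i => if 1 ≤ i ∧ i ≤ b then a else 0

/-- The partition obtained from `lam` by deleting its `j`-th column. -/
def delCol (lam : ℕ → ℕ) (j : ℕ) : ℕ → ℕ :=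
  fun r => if j ≤ lam r then lam r - 1 else lam r

/-- The partition obtained from `lam` by deleting its `i`-th row. -/
def delRow (lam : ℕ → ℕ) (i : ℕ) : ℕ → ℕ :=
  fun r => if r < i then lam r else lam (r + 1)

/-- The `j`-th column length `λ'_j` of `lam` (with `ℓ` rows). -/
def conjP (lam : ℕ → ℕ) (ℓ j : ℕ) : ℕ :=
  ((Finset.Icc 1 ℓ).filter (fun r => j ≤ lam r)).card

namespace Aux

variable (q : K)

lemma qInt_natCast (n : ℕ) : qInt q (n : ℤ) = (1 - q ^ n) / (1 - q) := by
  rw [qInt, zpow_natCast]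

variable {q} (hq0 : q ≠ 0) (hq1 : ∀ j : ℕ, 0 < j → q ^ j ≠ 1)

include hq1

lemma one_sub_q_ne : (1 : K) - q ≠ 0 := by
  intro h
  exact hq1 1 one_pos (by rw [pow_one]; linear_combination -h)

lemma qInt_ne_zero {n : ℕ} (hn : 1 ≤ n) : qInt q (n : ℤ) ≠ 0 := by
  rw [qInt_natCast]
  exact div_ne_zero (fun h => hq1 n hn (by linear_combination -h)) (one_sub_q_ne hq1)

lemma qInt_add (a b : ℕ) : qInt q ((a + b : ℕ) : ℤ) = qInt q a + q ^ a * qInt q b := by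
  have h0 := one_sub_q_ne hq1
  rw [qInt_natCast, qInt_natCast, qInt_natCast, pow_add]
  field_simp
  ring

omit hq1

lemma qFact_zero : qFact q 0 = 1 := by simp [qFact, qFall]

lemma qFact_succ (n : ℕ) : qFact q (n + 1) = qInt q ((n : ℤ) + 1) * qFact q n := by
  rw [qFact, qFact, qFall, qFall, Finset.prod_range_succ']
  have h1 : ∀ t ∈ Finset.range n,
      qInt q (((n + 1 : ℕ) : ℤ) - ((t + 1 : ℕ) : ℤ)) = qInt q ((n : ℤ) - (t : ℕ)) := by
    intro t _
    congr 1
    push_cast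
    ring
  rw [Finset.prod_congr rfl h1]
  have h0 : qInt q (((n + 1 : ℕ) : ℤ) - ((0 : ℕ) : ℤ)) = qInt q ((n : ℤ) + 1) := by
    norm_num
  rw [h0, mul_comm]

include hq1

lemma qFact_ne_zero (n : ℕ) : qFact q n ≠ 0 := by
  induction n with
  | zero => simp [qFact_zero]
  | succ n ih =>
    rw [qFact_succ]
    exact mul_ne_zero (by
      have := qInt_ne_zero hq1 (n := n + 1) (by omega)
      push_cast at this ⊢; exact this) ih

lemma qBinom_zero (n : ℕ) : qBinom q n 0 = 1 := by
  rw [qBinom, qFact_zero, Nat.sub_zero, one_mul, div_self (qFact_ne_zero hq1 n)]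

lemma qBinom_self (n : ℕ) : qBinom q n n = 1 := by
  rw [qBinom, Nat.sub_self, qFact_zero, mul_one, div_self (qFact_ne_zero hq1 n)]

lemma qBinom_pascal (k e : ℕ) :
    qBinom q (k + e + 2) (k + 1) =
      qBinom q (k + e + 1) k + q ^ (k + 1) * qBinom q (k + e + 1) (k + 1) := by
  rw [qBinom, qBinom, qBinom]
  have h1 : k + e + 2 - (k + 1) = e + 1 := by omega
  have h2 : k + e + 1 - k = e + 1 := by omega
  have h3 : k + e + 1 - (k + 1) = e := by omega
  rw [h1, h2, h3]
  have hk1 : qFact q (k + 1) = qInt q ((k : ℤ) + 1) * qFact q k := qFact_succ k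
  have he1 : qFact q (e + 1) = qInt q ((e : ℤ) + 1) * qFact q e := qFact_succ e
  have hke : qFact q (k + e + 2) = qInt q ((k : ℤ) + (e : ℤ) + 2) * qFact q (k + e + 1) := by
    have h := qFact_succ (n := k + e + 1) (q := q)
    push_cast at h
    rw [show (k : ℤ) + (e : ℤ) + 2 = (k : ℤ) + (e : ℤ) + 1 + 1 by ring]
    exact h
  have key : qInt q ((k : ℤ) + (e : ℤ) + 2) =
      qInt q ((k : ℤ) + 1) + q ^ (k + 1) * qInt q ((e : ℤ) + 1) := by
    have h := qInt_add hq1 (k+1) (e+1)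
    push_cast at h
    rw [show (k : ℤ) + (e : ℤ) + 2 = (k : ℤ) + 1 + ((e : ℤ) + 1) by ring]
    exact h
  have hFk := qFact_ne_zero hq1 k
  have hFe := qFact_ne_zero hq1 e
  have hFke := qFact_ne_zero hq1 (k + e + 1)
  have hik := qInt_ne_zero hq1 (n := k + 1) (by omega)
  have hie := qInt_ne_zero hq1 (n := e + 1) (by omega)
  push_cast at hik hie
  rw [hk1, he1, hke]
  field_simp
  linear_combination key

end Aux

lemma choose2_succ (n : ℕ) : (n + 1).choose 2 = n.choose 2 + n := by
  rw [Nat.choose_two_right, Nat.choose_two_right, Nat.triangle_succ]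

lemma coeff_prod_geom {q : K} (hq1 : ∀ j : ℕ, 0 < j → q ^ j ≠ 1) (a : ℕ) :
    ∀ i j : ℕ,
    (∏ t ∈ Finset.Icc (a+1) (a+i), (Polynomial.X - Polynomial.C (q ^ t))).coeff j =
      if j ≤ i then (-1:K)^(i-j) * q^((i-j)*a + (i-j+1).choose 2) * qBinom q i j
      else 0 := by
  intro i
  induction i with
  | zero =>
    intro j
    rw [Nat.add_zero, Finset.Icc_eq_empty (by omega), Finset.prod_empty, Polynomial.coeff_one]
    rcases Nat.eq_zero_or_pos j with h | h
    · subst h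
      simp [Aux.qBinom_self hq1 0]
    · rw [if_neg (by omega), if_neg (by omega)]
  | succ i ih =>
    intro j
    have hins : Finset.Icc (a+1) (a+(i+1)) = insert (a+i+1) (Finset.Icc (a+1) (a+i)) := by
      ext x
      simp only [Finset.mem_Icc, Finset.mem_insert]
      omega
    rw [hins, Finset.prod_insert (by simp only [Finset.mem_Icc]; omega)]
    rw [sub_mul, Polynomial.coeff_sub, Polynomial.coeff_C_mul]
    cases j with
    | zero =>
      rw [Polynomial.mul_coeff_zero, Polynomial.coeff_X_zero, zero_mul, zero_sub, ih 0]
      rw [if_pos (Nat.zero_le i), if_pos (Nat.zero_le (i+1))]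
      rw [Aux.qBinom_zero hq1, Aux.qBinom_zero hq1]
      simp only [Nat.sub_zero]
      rw [show i + 1 + 1 = (i + 1) + 1 from rfl, choose2_succ (i+1)]
      ring
    | succ n =>
      rw [Polynomial.coeff_X_mul, ih n, ih (n+1)]
      rcases lt_trichotomy (n+1) (i+1) with h | h | h
      · obtain ⟨d, hd⟩ : ∃ d, i = n + 1 + d := ⟨i - (n+1), by omega⟩
        subst hd
        rw [if_pos (by omega), if_pos (by omega), if_pos (by omega)]
        have hs1 : n + 1 + d - n = d + 1 := by omega
        have hs2 : n + 1 + d - (n+1) = d := by omega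
        have hs3 : n + 1 + d + 1 - (n+1) = d + 1 := by omega
        rw [hs1, hs2, hs3]
        have hp := Aux.qBinom_pascal hq1 n d
        have e1 : n + 1 + d + 1 = n + d + 2 := by omega
        have e2 : n + 1 + d = n + d + 1 := by omega
        rw [e1, e2, hp, show d + 1 + 1 = (d + 1) + 1 from rfl, choose2_succ (d+1)]
        ring
      · have hni : n = i := by omega
        subst hni
        rw [if_pos (le_refl n), if_neg (by omega), if_pos (by omega)]
        rw [Nat.sub_self, Nat.sub_self, Aux.qBinom_self hq1, Aux.qBinom_self hq1]
        simp
      · rw [if_neg (by omega), if_neg (by omega), if_neg (by omega)]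
        simp

lemma choose2_double (n : ℕ) : 2 * n.choose 2 + n = n * n := by
  induction n with
  | zero => rfl
  | succ n ih =>
    rw [choose2_succ]
    nlinarith [ih]

lemma choose2_add (a b : ℕ) : (a + b).choose 2 = a.choose 2 + a * b + b.choose 2 := by
  induction b with
  | zero => simp
  | succ b ih =>
    rw [show a + (b + 1) = (a + b) + 1 by omega, choose2_succ, ih, choose2_succ]
    ring

/-- The Garsia–Remmel `q`-hit numbers `H̃_j^{m}(λ)`, defined as the coefficients
of `∑_i R_i(λ)[m-i]! ∏_{t=m-i+1}^{m}(x - q^t)`, satisfy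
`H̃_j^{m}(λ) = q^{|λ| - jm} H_j^{m,m}(λ)`. -/
theorem stmt17 (q : K) (hq0 : q ≠ 0) (hq1 : ∀ j : ℕ, 0 < j → q ^ j ≠ 1)
    (m ℓ : ℕ) (lam : ℕ → ℕ) (hm : 1 ≤ m) (hpart : IsPartitionIn lam ℓ m m)
    (j : ℕ) :
    (∑ i ∈ Finset.range (m + 1),
        Polynomial.C (qRook q lam ℓ i * qFact q (m - i)) *
          ∏ t ∈ Finset.Icc (m - i + 1) m, (Polynomial.X - Polynomial.C (q ^ t))).coeff j =
      q ^ ((pSize lam ℓ : ℤ) - (j : ℤ) * m) * qHit q m m lam ℓ j := by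
  classical
  rw [Polynomial.finset_sum_coeff]
  have hcoef : ∀ i ∈ Finset.range (m+1),
      (Polynomial.C (qRook q lam ℓ i * qFact q (m - i)) *
        ∏ t ∈ Finset.Icc (m - i + 1) m, (Polynomial.X - Polynomial.C (q ^ t))).coeff j
      = if j ≤ i then qRook q lam ℓ i * qFact q (m - i) *
          ((-1:K)^(i-j) * q^((i-j)*(m-i) + (i-j+1).choose 2) * qBinom q i j) else 0 := by
    intro i hi
    simp only [Finset.mem_range] at hi
    rw [Polynomial.coeff_C_mul]
    have hicc : Finset.Icc (m - i + 1) m = Finset.Icc ((m-i)+1) ((m-i)+i) := by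
      congr 1
      omega
    rw [hicc, coeff_prod_geom hq1 (m-i) i j, mul_ite, mul_zero]
  rw [Finset.sum_congr rfl hcoef, ← Finset.sum_filter]
  have hfil : (Finset.range (m+1)).filter (fun i => j ≤ i) = Finset.Icc j m := by
    ext x
    simp only [Finset.mem_filter, Finset.mem_range, Finset.mem_Icc]
    omega
  rw [hfil, qHit, Nat.sub_self, Aux.qFact_zero, div_one, Finset.mul_sum, Finset.mul_sum]
  apply Finset.sum_congr rfl
  intro i hi
  simp only [Finset.mem_Icc] at hi
  obtain ⟨hij, him⟩ := hi
  have hsign : (-1:K)^(i+j) = (-1:K)^(i-j) := by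
    rw [show i + j = (i-j) + 2*j by omega, pow_add, pow_mul, neg_one_sq, one_pow, mul_one]
  have hexp : ((pSize lam ℓ : ℤ) - (j:ℤ) * m) + (((j.choose 2 : ℕ):ℤ) - (pSize lam ℓ : ℤ))
      + ((m:ℤ) * i - ((i.choose 2 : ℕ):ℤ))
      = (((i-j)*(m-i) + (i-j+1).choose 2 : ℕ) : ℤ) := by
    obtain ⟨d, hd⟩ : ∃ d, i = j + d := ⟨i - j, by omega⟩
    obtain ⟨c, hc⟩ : ∃ c, m = i + c := ⟨m - i, by omega⟩
    subst hd hc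
    have h1 : j + d - j = d := by omega
    have h2 : j + d + c - (j + d) = c := by omega
    rw [h1, h2, choose2_add j d, choose2_succ d]
    have hdd : ((2 * d.choose 2 + d : ℕ) : ℤ) = ((d * d : ℕ) : ℤ) := by
      rw [choose2_double]
    push_cast at hdd ⊢
    linear_combination -hdd
  rw [hsign, ← zpow_natCast q ((i-j)*(m-i) + (i-j+1).choose 2), ← hexp,
    zpow_add₀ hq0, zpow_add₀ hq0]
  ring
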